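/- Let λ ∈ ℂ be a nonzero complex number which is not a root of unity, let k, m ∈ ℂ with k ≠ 1, and let h be a Laurent polynomial over ℂ satisfying the identity k·h(x) − λ·h(λx) = m·x⁻¹ (as Laurent polynomials). Then there exist n ∈ ℤ and μ ∈ ℂ such that h(x) = μ·xⁿ + (m/(k−1))·x⁻¹; moreover, if μ ≠ 0 and n ≠ −1, then k = λ^(n+1). -/

import Mathlib

open LaurentPolynomial

/-- The Laurent polynomial `x ↦ h (c * x)`, i.e. `∑ c^j h_j x^j`. -/
noncomputable def LaurentPolynomial.scale (c : ℂ) (h : LaurentPolynomial ℂ) :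
    LaurentPolynomial ℂ :=
  Finsupp.sum h.coeff fun j a => LaurentPolynomial.C (c ^ j * a) * LaurentPolynomial.T j

lemma scale_apply (c : ℂ) (h : LaurentPolynomial ℂ) (i : ℤ) :
    (LaurentPolynomial.scale c h).coeff i = c ^ i * h.coeff i := by
  rw [LaurentPolynomial.scale]
  simp only [← LaurentPolynomial.single_eq_C_mul_T]
  rw [AddMonoidAlgebra.coeff_finsuppSum, Finsupp.sum_apply, Finsupp.sum]
  simp only [AddMonoidAlgebra.coeff_single, Finsupp.single_apply]
  rw [Finset.sum_ite_eq' h.coeff.support i (fun j => c ^ j * h.coeff j)]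
  by_cases hi : i ∈ h.coeff.support
  · simp [hi]
  · simp [hi, Finsupp.notMem_support_iff.mp hi]

lemma C_mul_apply (a : ℂ) (f : LaurentPolynomial ℂ) (i : ℤ) :
    (LaurentPolynomial.C a * f).coeff i = a * f.coeff i :=
  AddMonoidAlgebra.coeff_single_zero_mul f a i

lemma sub_apply' (f g : LaurentPolynomial ℂ) (i : ℤ) : (f - g).coeff i = f.coeff i - g.coeff i := rfl

theorem stmt0 (lam : ℂ) (hlam0 : lam ≠ 0) (hlam : ∀ N : ℕ, 0 < N → lam ^ N ≠ 1)
    (k m : ℂ) (hk : k ≠ 1) (h : LaurentPolynomial ℂ)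
    (heq : LaurentPolynomial.C k * h - LaurentPolynomial.C lam * LaurentPolynomial.scale lam h
      = LaurentPolynomial.C m * LaurentPolynomial.T (-1)) :
    ∃ (n : ℤ) (μ : ℂ),
      h = LaurentPolynomial.C μ * LaurentPolynomial.T n
        + LaurentPolynomial.C (m / (k - 1)) * LaurentPolynomial.T (-1) ∧
      (μ ≠ 0 → n ≠ -1 → k = lam ^ (n + 1)) := by
  have hk1 : k - 1 ≠ 0 := sub_ne_zero.mpr hk
  -- coefficientwise equation
  have key : ∀ j : ℤ, (k - lam ^ (j + 1)) * h.coeff j = if j = -1 then m else 0 := by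
    intro j
    have := congrArg (fun f : LaurentPolynomial ℂ => f.coeff j) heq
    simp only [sub_apply', C_mul_apply, scale_apply,
      ← LaurentPolynomial.single_eq_C_mul_T, AddMonoidAlgebra.coeff_single, Finsupp.single_apply] at this
    have h2 : (if j = -1 then m else 0) = (if (-1 : ℤ) = j then m else 0) := by
      rcases eq_or_ne j (-1) with e | e
      · simp [e]
      · rw [if_neg e, if_neg (fun e' => e e'.symm)]
    rw [sub_mul, zpow_add_one₀ hlam0, h2]
    linear_combination this
  -- lam powers are injective
  have hz : ∀ d : ℤ, lam ^ d = 1 → d = 0 := by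
    intro d hd
    by_contra hne
    refine hlam d.natAbs (Int.natAbs_pos.mpr hne) ?_
    have : lam ^ (d.natAbs : ℤ) = 1 := by
      rcases le_or_gt 0 d with h' | h'
      · rwa [Int.natAbs_of_nonneg h']
      · rw [show (d.natAbs : ℤ) = -d by omega, zpow_neg, hd, inv_one]
    rwa [zpow_natCast] at this
  have hinj : ∀ a b : ℤ, lam ^ a = lam ^ b → a = b := by
    intro a b hab
    have : lam ^ (a - b) = 1 := by
      rw [zpow_sub₀ hlam0, hab, div_self (zpow_ne_zero _ hlam0)]
    have := hz _ this
    omega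
  -- h (-1)
  have hm1 : h.coeff (-1) = m / (k - 1) := by
    have := key (-1)
    norm_num at this
    field_simp
    linear_combination this
  set s : LaurentPolynomial ℂ := AddMonoidAlgebra.single (-1) (m / (k - 1)) with hs
  set g : LaurentPolynomial ℂ := h - s with hg
  have hgapp : ∀ j : ℤ, j ≠ -1 → g.coeff j = h.coeff j := by
    intro j hj
    rw [hg, sub_apply', hs]
    rw [show s.coeff j = 0 from Finsupp.single_eq_of_ne hj, sub_zero]
  have hgm1 : g.coeff (-1) = 0 := by
    rw [hg, sub_apply', hs, show s.coeff (-1) = m / (k - 1) from Finsupp.single_eq_same, hm1, sub_self]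
  have hsupp : ∀ j ∈ g.coeff.support, j ≠ -1 ∧ k = lam ^ (j + 1) := by
    intro j hj
    have hj0 : g.coeff j ≠ 0 := Finsupp.mem_support_iff.mp hj
    have hjne : j ≠ -1 := fun e => hj0 (e ▸ hgm1)
    have hhj : h.coeff j ≠ 0 := by rwa [hgapp j hjne] at hj0
    have := key j
    rw [if_neg hjne] at this
    rcases mul_eq_zero.mp this with h1 | h1
    · exact ⟨hjne, by linear_combination h1⟩
    · exact absurd h1 hhj
  by_cases hg0 : g = 0
  · refine ⟨0, 0, ?_, fun hμ _ => absurd rfl hμ⟩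
    have hh : h = s := by
      have := sub_eq_zero.mp hg0
      simpa using this
    rw [hh, hs, LaurentPolynomial.single_eq_C_mul_T, map_zero, zero_mul, zero_add]
  · obtain ⟨n, hn⟩ := Finsupp.support_nonempty_iff.mpr (fun e => hg0 (AddMonoidAlgebra.coeff_eq_zero.mp e))
    refine ⟨n, g.coeff n, ?_, fun hμ hn1 => (hsupp n hn).2⟩
    have hgs : g = AddMonoidAlgebra.single n (g.coeff n) := by
      ext j
      rw [AddMonoidAlgebra.coeff_single, Finsupp.single_apply]
      by_cases hj : n = j
      · rw [if_pos hj, hj]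
      · rw [if_neg hj]
        by_contra hj0
        have := hinj (n + 1) (j + 1)
          (((hsupp n hn).2.symm.trans (hsupp j (Finsupp.mem_support_iff.mpr hj0)).2))
        omega
    have hh : h = g + s := by rw [hg]; ring
    rw [← LaurentPolynomial.single_eq_C_mul_T, ← LaurentPolynomial.single_eq_C_mul_T,
      ← hs, ← hgs]
    exact hh
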